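/- The total number of distinct cherries (unordered pairs of taxa) displayed in a binary tree-child phylogenetic network on n taxa is at most 2n−3. Consequently, if a set 𝒯 of binary phylogenetic trees on n taxa is simultaneously displayed in some binary tree-child network, then the number of distinct cherries occurring among the trees of 𝒯 is at most 2n−3. -/

import Mathlib

/-- A rooted, leaf-labeled digraph: a candidate phylogenetic network on taxon set `X`. -/
structure Net (V : Type) (X : Type) where
  E : V → V → Prop
  root : V
  leaf : X → V

namespace Net

variable {V X : Type}

/-- Indegree of a vertex. -/
noncomputable def inDeg (N : Net V X) (v : V) : ℕ := {u | N.E u v}.ncard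

/-- Outdegree of a vertex. -/
noncomputable def outDeg (N : Net V X) (v : V) : ℕ := {w | N.E v w}.ncard

def IsLeaf (N : Net V X) (v : V) : Prop := N.outDeg v = 0

/-- A tree node: indegree at most one. -/
def IsTreeNode (N : Net V X) (v : V) : Prop := N.inDeg v ≤ 1

/-- A reticulate node: indegree two (or more, in the non-binary case: indegree ≥ 2). -/
def IsRet (N : Net V X) (v : V) : Prop := 2 ≤ N.inDeg v

def Acyclic (N : Net V X) : Prop := ∀ v, ¬ Relation.TransGen N.E v v

/-- Common well-formedness conditions of a rooted phylogenetic network: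
acyclic, rooted, every node reachable from the root, leaves bijectively labeled by `X`. -/
structure IsPhylo (N : Net V X) : Prop where
  acyclic : N.Acyclic
  rootIn : N.inDeg N.root = 0
  reach : ∀ v, Relation.ReflTransGen N.E N.root v
  leafInj : Function.Injective N.leaf
  leafIsLeaf : ∀ x, N.IsLeaf (N.leaf x)
  leafSurj : ∀ v, N.IsLeaf v → ∃ x, N.leaf x = v
  leafIn : ∀ x, N.inDeg (N.leaf x) = 1

/-- A binary phylogenetic network: every non-leaf node is either a tree node
(indegree ≤ 1, outdegree 2) or a reticulate node (indegree 2, outdegree 1). -/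
structure IsBinaryNet (N : Net V X) extends IsPhylo N : Prop where
  deg : ∀ v, ¬ N.IsLeaf v →
    (N.inDeg v ≤ 1 ∧ N.outDeg v = 2) ∨ (N.inDeg v = 2 ∧ N.outDeg v = 1)

/-- Tree-child property: every non-leaf node has a child that is a tree node. -/
def TreeChild (N : Net V X) : Prop :=
  ∀ v, ¬ N.IsLeaf v → ∃ w, N.E v w ∧ N.IsTreeNode w

/-- A binary phylogenetic tree: a binary phylogenetic network without reticulate nodes. -/
def IsBinaryTree (N : Net V X) : Prop := N.IsBinaryNet ∧ ∀ v, N.inDeg v ≤ 1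

/-- A tree edge: an edge entering a tree node. -/
def TreeEdge (N : Net V X) (u v : V) : Prop := N.E u v ∧ N.IsTreeNode v

/-- The tree component rooted at `x`: all nodes reachable from `x` via tree edges. -/
def comp (N : Net V X) (x : V) : Set V := {v | Relation.ReflTransGen N.TreeEdge x v}

/-- `u` and `v` lie in a common tree component. -/
def InSameComp (N : Net V X) (u v : V) : Prop :=
  ∃ x, (x = N.root ∨ N.IsRet x) ∧ u ∈ N.comp x ∧ v ∈ N.comp x

/-- The taxa `x` and `y` form a cherry: their leaves share a common parent. -/
def HasCherry (N : Net V X) (x y : X) : Prop :=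
  x ≠ y ∧ ∃ p, N.E p (N.leaf x) ∧ N.E p (N.leaf y)

/-- The set of cherries of a tree, as unordered pairs of taxa. -/
def cherries (N : Net V X) : Set (Sym2 X) :=
  {p | ∃ x y, p = s(x, y) ∧ N.HasCherry x y}

/-- The tree has the 3-subtree `((a,b),c)`: a node whose two children are the leaf `c`
and the parent of the cherry `(a,b)`. -/
def Has3Subtree (N : Net V X) (a b c : X) : Prop :=
  a ≠ b ∧ a ≠ c ∧ b ≠ c ∧
  ∃ v p, N.E v p ∧ N.E v (N.leaf c) ∧ N.E p (N.leaf a) ∧ N.E p (N.leaf b)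

def IsAncestor (N : Net V X) (u v : V) : Prop := Relation.ReflTransGen N.E u v

/-- `l` is the least common ancestor of `u` and `v`. -/
def IsLCA (N : Net V X) (l u v : V) : Prop :=
  N.IsAncestor l u ∧ N.IsAncestor l v ∧
  ∀ w, N.IsAncestor w u → N.IsAncestor w v → N.IsAncestor w l

end Net

/-- Paths in `S` from `a` to `b` whose vertices other than `a` and `b` avoid the set `A`. -/
def pathAvoid {V : Type} (S : V → V → Prop) (A : Set V) (a b : V) : Prop :=
  Relation.ReflTransGen (fun u v => S u v ∧ (v = b ∨ v ∉ A)) a b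

/-- `T` is displayed in `N`: `N` contains a subdivision of `T` preserving the leaf labels,
i.e. `T` is obtained from `N` by deleting all but one incoming edge at each reticulate node,
pruning nodes without labeled leaf descendants, and suppressing degree-two nodes. -/
def Display {VT V X : Type} (T : Net VT X) (N : Net V X) : Prop :=
  ∃ (S : V → V → Prop) (φ : VT → V),
    (∀ u v, S u v → N.E u v) ∧
    Function.Injective φ ∧
    (∀ x, φ (T.leaf x) = N.leaf x) ∧
    (∀ a b, T.E a b → pathAvoid S (Set.range φ) (φ a) (φ b)) ∧
    (∀ a : VT, {w | S (φ a) w}.ncard = T.outDeg a ∧ {u | S u (φ a)}.ncard = T.inDeg a) ∧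
    (∀ v : V, v ∉ Set.range φ → ((∃ u, S u v) ∨ (∃ w, S v w)) →
      {w | S v w}.ncard = 1 ∧ {u | S u v}.ncard = 1)

/-- `N` displays the cherry `(x, y)`: some binary tree displayed in `N` has `(x,y)` as a cherry. -/
def DisplaysCherry {V X : Type} (N : Net V X) (x y : X) : Prop :=
  ∃ (VT : Type) (T : Net VT X),
    Finite VT ∧ T.IsBinaryTree ∧ Display T N ∧ T.HasCherry x y

/-- `N` displays the 3-subtree `((a,b),c)`. -/
def Displays3Subtree {V X : Type} (N : Net V X) (a b c : X) : Prop :=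
  ∃ (VT : Type) (T : Net VT X),
    Finite VT ∧ T.IsBinaryTree ∧ Display T N ∧ T.Has3Subtree a b c

/-- Isomorphism of leaf-labeled rooted digraphs. -/
def NetIso {V1 V2 X : Type} (N1 : Net V1 X) (N2 : Net V2 X) : Prop :=
  ∃ f : V1 ≃ V2, (∀ u v, N1.E u v ↔ N2.E (f u) (f v)) ∧
    f N1.root = N2.root ∧ ∀ x, f (N1.leaf x) = N2.leaf x

section CherryBound

set_option linter.unusedVariables false
set_option linter.unusedSectionVars false

open Relation

variable {V X : Type} [Finite V] [Finite X]

/-- If a finite set has exactly two elements `a ≠ b`, any member is `a` or `b`. -/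
lemma ncard2_mem_cases {α : Type} {s : Set α} (hfin : s.Finite) (h : s.ncard = 2) {a b c : α}
    (ha : a ∈ s) (hb : b ∈ s) (hab : a ≠ b) (hc : c ∈ s) : c = a ∨ c = b := by
  have hsub : ({a, b} : Set α) ⊆ s := by
    intro z hz
    rcases hz with rfl | hz
    · exact ha
    · rcases hz with rfl; exact hb
  have hs : ({a, b} : Set α) = s :=
    Set.eq_of_subset_of_ncard_le hsub (by rw [h, Set.ncard_pair hab]) hfin
  rw [← hs] at hc
  rcases hc with rfl | hc
  · exact Or.inl rfl
  · rcases hc with rfl; exact Or.inr rfl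

lemma ncard2_exists_other {α : Type} {s : Set α} (hfin : s.Finite) (h : s.ncard = 2) {d : α}
    (hd : d ∈ s) : ∃ e ∈ s, e ≠ d := by
  have h1 : 1 < s.ncard := by omega
  obtain ⟨x, hx, y, hy, hxy⟩ := (Set.one_lt_ncard hfin).1 h1
  by_cases hxd : x = d
  · exact ⟨y, hy, by rw [← hxd]; exact fun hh => hxy hh.symm⟩
  · exact ⟨x, hx, hxd⟩

lemma ncard1_unique {α : Type} {s : Set α} (hfin : s.Finite) (h : s.ncard ≤ 1) {a b : α}
    (ha : a ∈ s) (hb : b ∈ s) : a = b :=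
  (Set.ncard_le_one_iff hfin).1 h ha hb

namespace Net

variable {N : Net V X}

lemma not_isLeaf_of_edge {v w : V} (h : N.E v w) : ¬ N.IsLeaf v := by
  intro hl
  have : {w | N.E v w} = ∅ := (Set.ncard_eq_zero (Set.toFinite _)).1 hl
  exact absurd (this ▸ h : w ∈ (∅ : Set V)) (Set.notMem_empty w)

lemma isLeaf_no_edge {v w : V} (hl : N.IsLeaf v) (h : N.E v w) : False :=
  not_isLeaf_of_edge h hl

lemma parent_unique {v a b : V} (hv : ¬ N.IsRet v) (ha : N.E a v) (hb : N.E b v) : a = b := by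
  have h1 : N.inDeg v ≤ 1 := by
    by_contra hh
    exact hv (show 2 ≤ N.inDeg v by omega)
  exact ncard1_unique (Set.toFinite _) h1 ha hb

lemma leaf_not_ret (hN : N.IsPhylo) {v : V} (hl : N.IsLeaf v) : ¬ N.IsRet v := by
  obtain ⟨x, rfl⟩ := hN.leafSurj v hl
  intro hr
  rw [IsRet, hN.leafIn x] at hr
  omega

lemma ret_not_leaf (hN : N.IsPhylo) {v : V} (hr : N.IsRet v) : ¬ N.IsLeaf v :=
  fun hl => leaf_not_ret hN hl hr

lemma outDeg_two (hN : N.IsBinaryNet) {v : V} (hl : ¬ N.IsLeaf v) (hr : ¬ N.IsRet v) :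
    N.outDeg v = 2 := by
  rcases hN.deg v hl with ⟨_, h⟩ | ⟨h, _⟩
  · exact h
  · exact absurd (by rw [IsRet, h]) hr

lemma ret_outDeg_one (hN : N.IsBinaryNet) {v : V} (hr : N.IsRet v) : N.outDeg v = 1 := by
  have hl : ¬ N.IsLeaf v := ret_not_leaf hN.toIsPhylo hr
  rcases hN.deg v hl with ⟨h, _⟩ | ⟨_, h⟩
  · exact absurd hr (by rw [IsRet]; omega)
  · exact h

lemma ret_inDeg_two (hN : N.IsBinaryNet) {v : V} (hr : N.IsRet v) : N.inDeg v = 2 := by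
  have hl : ¬ N.IsLeaf v := ret_not_leaf hN.toIsPhylo hr
  rcases hN.deg v hl with ⟨h, _⟩ | ⟨h, _⟩
  · exact absurd hr (by rw [IsRet]; omega)
  · exact h

lemma child_unique_of_ret (hN : N.IsBinaryNet) {v a b : V} (hr : N.IsRet v)
    (ha : N.E v a) (hb : N.E v b) : a = b := by
  have h1 := ret_outDeg_one hN hr
  have h2 : {w | N.E v w}.ncard ≤ 1 := by
    change N.outDeg v ≤ 1; omega
  exact ncard1_unique (Set.toFinite _) h2 ha hb

lemma children_cases (hN : N.IsBinaryNet) {v a b c : V} (hl : ¬ N.IsLeaf v) (hr : ¬ N.IsRet v)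
    (ha : N.E v a) (hb : N.E v b) (hab : a ≠ b) (hc : N.E v c) : c = a ∨ c = b :=
  ncard2_mem_cases (Set.toFinite _) (outDeg_two hN hl hr) ha hb hab hc

lemma exists_other_child (hN : N.IsBinaryNet) {v d : V} (hl : ¬ N.IsLeaf v) (hr : ¬ N.IsRet v)
    (hd : N.E v d) : ∃ e, N.E v e ∧ e ≠ d :=
  match ncard2_exists_other (Set.toFinite _) (outDeg_two hN hl hr) hd with
  | ⟨e, he, hed⟩ => ⟨e, he, hed⟩

/-- A parent of a reticulation is a non-leaf tree node. -/
lemma ret_parent (hN : N.IsBinaryNet) (htc : N.TreeChild) {u b : V} (hub : N.E u b)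
    (hb : N.IsRet b) : ¬ N.IsLeaf u ∧ ¬ N.IsRet u := by
  have hl : ¬ N.IsLeaf u := not_isLeaf_of_edge hub
  refine ⟨hl, fun hr => ?_⟩
  obtain ⟨w, hw, hwt⟩ := htc u hl
  have : w = b := child_unique_of_ret hN hr hw hub
  subst this
  rw [IsTreeNode] at hwt
  rw [IsRet] at hb
  omega

/-- A vertex has at most one reticulation child. -/
lemma ret_child_unique (hN : N.IsBinaryNet) (htc : N.TreeChild) {v b1 b2 : V}
    (h1 : N.E v b1) (h2 : N.E v b2) (hr1 : N.IsRet b1) (hr2 : N.IsRet b2) : b1 = b2 := by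
  by_cases hv : N.IsRet v
  · exact child_unique_of_ret hN hv h1 h2
  · by_contra hne
    have hl : ¬ N.IsLeaf v := not_isLeaf_of_edge h1
    obtain ⟨w, hw, hwt⟩ := htc v hl
    rcases children_cases hN hl hv h1 h2 hne hw with rfl | rfl
    · rw [IsTreeNode] at hwt; rw [IsRet] at hr1; omega
    · rw [IsTreeNode] at hwt; rw [IsRet] at hr2; omega

lemma root_not_leaf (hN : N.IsPhylo) : ¬ N.IsLeaf N.root := by
  intro hl
  obtain ⟨x, hx⟩ := hN.leafSurj _ hl
  have := hN.leafIn x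
  rw [hx, hN.rootIn] at this
  omega

lemma root_not_ret (hN : N.IsPhylo) : ¬ N.IsRet N.root := by
  rw [IsRet, hN.rootIn]; omega

lemma nonroot_has_parent (hN : N.IsPhylo) {v : V} (hv : v ≠ N.root) : ∃ u, N.E u v := by
  rcases (hN.reach v).cases_tail with h | ⟨c, _, hc⟩
  · exact absurd h hv
  · exact ⟨c, hc⟩

lemma acyclic_wf (hac : N.Acyclic) : WellFounded (Relation.TransGen N.E) := by
  have h1 : IsTrans V (Relation.TransGen N.E) := ⟨fun _ _ _ => Relation.TransGen.trans⟩
  have h2 : IsIrrefl V (Relation.TransGen N.E) := ⟨hac⟩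
  exact Finite.wellFounded_of_trans_of_irrefl _

lemma acyclic_wf_swap (hac : N.Acyclic) :
    WellFounded (fun a b : V => Relation.TransGen N.E b a) := by
  have h1 : IsTrans V (fun a b : V => Relation.TransGen N.E b a) :=
    ⟨fun _ _ _ h1 h2 => Relation.TransGen.trans h2 h1⟩
  have h2 : IsIrrefl V (fun a b : V => Relation.TransGen N.E b a) := ⟨hac⟩
  exact Finite.wellFounded_of_trans_of_irrefl _

lemma no_mixed_cycle (hac : N.Acyclic) {a b : V} (h1 : Relation.ReflTransGen N.E a b)
    (h2 : Relation.TransGen N.E b a) : False := by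
  rcases (Relation.reflTransGen_iff_eq_or_transGen.1 h1) with rfl | h1'
  · exact hac _ h2
  · exact hac _ (h1'.trans h2)

end Net

end CherryBound
section CherryFW

set_option linter.unusedVariables false
set_option linter.unusedSectionVars false

open Relation

variable {V X : Type} [Finite V] [Finite X]

namespace Net

/-- The forced walk: the unique suppressible descending path in a tree-child network. -/
inductive FW (N : Net V X) : V → X → Prop
  | leaf (x : X) : FW N (N.leaf x) x
  | ret {c d : V} {x : X} : N.IsRet c → N.E c d → FW N d x → FW N c x
  | tree {c d e : V} {x : X} : ¬ N.IsRet c → N.E c d → ¬ N.IsRet d → N.E c e → N.IsRet e →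
      FW N d x → FW N c x

variable {N : Net V X}

lemma FW_leaf_inv (hN : N.IsBinaryNet) {c : V} {y : X} (h : N.FW c y) (hl : N.IsLeaf c) :
    c = N.leaf y := by
  cases h with
  | leaf => rfl
  | ret _ hcd _ => exact absurd hcd (fun h => isLeaf_no_edge hl h)
  | tree _ hcd _ _ _ _ => exact absurd hcd (fun h => isLeaf_no_edge hl h)

lemma FW_det (hN : N.IsBinaryNet) (htc : N.TreeChild) {c : V} {x : X}
    (h1 : N.FW c x) : ∀ y, N.FW c y → x = y := by
  induction h1 with
  | leaf x =>
    intro y h2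
    exact hN.leafInj (FW_leaf_inv hN h2 (hN.leafIsLeaf x))
  | ret hr hcd hd ih =>
    rename_i c d x'
    intro y h2
    cases h2 with
    | leaf => exact absurd (hN.leafIsLeaf _) (not_isLeaf_of_edge hcd)
    | ret hr2 hcd2 hd2 => exact ih _ ((child_unique_of_ret hN hr hcd hcd2) ▸ hd2)
    | tree hc2 _ _ _ _ _ => exact absurd hr hc2
  | tree hc hcd hdr hce hre hd ih =>
    rename_i c d e x'
    intro y h2
    cases h2 with
    | leaf => exact absurd (hN.leafIsLeaf _) (not_isLeaf_of_edge hcd)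
    | ret hr2 _ _ => exact absurd hr2 hc
    | tree hc2 hcd2 hd2r hce2 hre2 hd2 =>
      have hl : ¬ N.IsLeaf c := not_isLeaf_of_edge hcd
      have hde : d ≠ e := fun h => hdr (h ▸ hre)
      rcases children_cases hN hl hc hcd hce hde hcd2 with rfl | rfl
      · exact ih _ hd2
      · exact absurd hre hd2r

/-- If `v` has non-reticulate child `d` and reticulate child `e`, then walks from `v`
and from `d` agree. -/
lemma FW_tree_inv (hN : N.IsBinaryNet) (htc : N.TreeChild) {v d e : V}
    (hvd : N.E v d) (hdnr : ¬ N.IsRet d) (hve : N.E v e) (hre : N.IsRet e) (x : X) :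
    N.FW v x ↔ N.FW d x := by
  have hvl : ¬ N.IsLeaf v := not_isLeaf_of_edge hvd
  have hvr : ¬ N.IsRet v := (ret_parent hN htc hve hre).2
  constructor
  · intro h
    cases h with
    | leaf => exact absurd (hN.leafIsLeaf _) hvl
    | ret hr2 _ _ => exact absurd hr2 hvr
    | tree hc2 hcd2 hd2r hce2 hre2 hd2 =>
      have hde : d ≠ e := fun h => hdnr (h ▸ hre)
      rcases children_cases hN hvl hvr hvd hve hde hcd2 with rfl | rfl
      · exact hd2
      · exact absurd hre hd2r
  · intro h
    exact FW.tree hvr hvd hdnr hve hre h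

/-- The candidate cherry displayed locally at a vertex. -/
def CherryAt (N : Net V X) (v : V) (p : Sym2 X) : Prop :=
  ∃ a b x y, N.E v a ∧ N.E v b ∧ a ≠ b ∧ N.FW a x ∧ N.FW b y ∧ x ≠ y ∧ p = s(x, y)

lemma CherryAt_treeNode (hN : N.IsBinaryNet) {v : V} {p : Sym2 X} (h : N.CherryAt v p) :
    ¬ N.IsLeaf v ∧ ¬ N.IsRet v := by
  obtain ⟨a, b, x, y, ha, hb, hab, _, _, _, _⟩ := h
  refine ⟨not_isLeaf_of_edge ha, fun hr => ?_⟩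
  have h1 := ret_outDeg_one hN hr
  exact hab (child_unique_of_ret hN hr ha hb)

lemma CherryAt_det (hN : N.IsBinaryNet) (htc : N.TreeChild) {v : V} {p q : Sym2 X}
    (hp : N.CherryAt v p) (hq : N.CherryAt v q) : p = q := by
  obtain ⟨hvl, hvr⟩ := CherryAt_treeNode hN hp
  obtain ⟨a, b, x, y, ha, hb, hab, hax, hby, hxy, rfl⟩ := hp
  obtain ⟨a', b', x', y', ha', hb', hab', hax', hby', hxy', rfl⟩ := hq
  rcases children_cases hN hvl hvr ha hb hab ha' with rfl | rfl
  · rcases children_cases hN hvl hvr ha hb hab hb' with rfl | rfl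
    · exact absurd rfl hab'
    · rw [FW_det hN htc hax _ hax', FW_det hN htc hby _ hby']
  · rcases children_cases hN hvl hvr ha hb hab hb' with rfl | rfl
    · rw [FW_det hN htc hax _ hby', FW_det hN htc hby _ hax']
      exact Sym2.eq_swap
    · exact absurd rfl hab'

end Net

end CherryFW
section CherryDisp

set_option linter.unusedVariables false
set_option linter.unusedSectionVars false
set_option maxHeartbeats 1000000

open Relation

variable {V X : Type} [Fintype V] [Fintype X]

namespace Net

variable {N : Net V X}

/-- Structure of a displayed cherry: it is witnessed locally by forced walks. -/
lemma displayed_cherry_at (hN : N.IsBinaryNet) (htc : N.TreeChild) {x y : X}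
    (h : DisplaysCherry N x y) : ∃ v, N.CherryAt v s(x, y) := by
  obtain ⟨VT, T, hfinT, hTbt, ⟨S, φ, hSE, hinj, hleafφ, hpathφ, hdegφ, hdegS⟩,
    hxy, p, hpx, hpy⟩ := h
  haveI : Finite VT := hfinT
  have hTbin : T.IsBinaryNet := hTbt.1
  have hTin : ∀ v, T.inDeg v ≤ 1 := hTbt.2
  have hTphylo : T.IsPhylo := hTbin.toIsPhylo
  -- indegree of a non-root vertex of a tree is 1
  have hTindeg : ∀ t : VT, t ≠ T.root → T.inDeg t = 1 := by
    intro t ht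
    obtain ⟨u, hu⟩ := nonroot_has_parent hTphylo ht
    refine le_antisymm (hTin t) ?_
    have : ({u' | T.E u' t} : Set VT).Nonempty := ⟨u, hu⟩
    have := (Set.ncard_pos (Set.toFinite _)).2 this
    exact this
  -- images of tree paths are network paths
  have hEpathφ : ∀ a b : VT, ReflTransGen T.E a b → ReflTransGen N.E (φ a) (φ b) := by
    intro a b hab
    induction hab with
    | refl => exact ReflTransGen.refl
    | tail hstep hlast ih =>
      refine ih.trans ?_
      exact ReflTransGen.mono (fun u v hv => hSE u v hv.1) _ _ (hpathφ _ _ hlast)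
  have hrootreach : ∀ a : VT, ReflTransGen N.E (φ T.root) (φ a) := fun a =>
    hEpathφ _ _ (hTphylo.reach a)
  -- the forcing lemma: tree paths below used vertices must be used
  have force : ∀ c0 : V, ReflTransGen N.E (φ T.root) c0 →
      ∀ u, TransGen N.E c0 u → ¬ N.IsRet u → ∀ q, N.E q u → S q u := by
    intro c0 hc0 u
    induction u using (acyclic_wf_swap hN.acyclic).induction with
    | _ u IH =>
      intro hcu hunr q hqu
      by_cases hlf : N.IsLeaf u
      · obtain ⟨z, rfl⟩ := hN.leafSurj u hlf
        have hin : ({w | S w (N.leaf z)} : Set V).ncard = 1 := by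
          have h1 := (hdegφ (T.leaf z)).2
          rw [hleafφ z] at h1
          rw [h1, hTphylo.leafIn z]
        obtain ⟨w, hw⟩ := Set.nonempty_of_ncard_ne_zero (s := {w | S w (N.leaf z)}) (by omega)
        have hwq : w = q := parent_unique hunr (hSE _ _ hw) hqu
        exact hwq ▸ hw
      · have hd2 : N.outDeg u = 2 := outDeg_two hN hlf hunr
        obtain ⟨w0, hw0, hw0t⟩ := htc u hlf
        have hw0nr : ¬ N.IsRet w0 := fun hr => by
          rw [IsTreeNode] at hw0t; rw [IsRet] at hr; omega
        have hSuw0 : S u w0 := IH w0 (TransGen.single hw0) (hcu.tail hw0) hw0nr u hw0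
        have hin : ({w | S w u} : Set V).ncard = 1 := by
          by_cases hA : u ∈ Set.range φ
          · obtain ⟨t, rfl⟩ := hA
            have htroot : t ≠ T.root := by
              rintro rfl
              exact no_mixed_cycle hN.acyclic hc0 hcu
            rw [(hdegφ t).2, hTindeg t htroot]
          · exact (hdegS u hA (Or.inr ⟨w0, hSuw0⟩)).2
        obtain ⟨w, hw⟩ := Set.nonempty_of_ncard_ne_zero (s := {w | S w u}) (by omega)
        have hwq : w = q := parent_unique hunr (hSE _ _ hw) hqu
        exact hwq ▸ hw
  -- walking down an embedded suppressed path yields a forced walk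
  have main : ∀ (z : X) (c : V),
      ReflTransGen (fun u v => S u v ∧ (v = N.leaf z ∨ v ∉ Set.range φ)) c (N.leaf z) →
      (c = N.leaf z ∨ c ∉ Set.range φ) → ReflTransGen N.E (φ T.root) c → N.FW c z := by
    intro z c hpath
    induction hpath using Relation.ReflTransGen.head_induction_on with
    | refl => intro _ _; exact FW.leaf z
    | @head a c' h' hpath2 ih =>
      intro ha hroot
      obtain ⟨hS, hc'cond⟩ := h'
      have hEac' : N.E a c' := hSE _ _ hS
      rcases ha with rfl | hA
      · exact absurd hEac' (fun hh => isLeaf_no_edge (hN.leafIsLeaf z) hh)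
      · have hdegs := hdegS a hA (Or.inr ⟨c', hS⟩)
        have hroot' : ReflTransGen N.E (φ T.root) c' := hroot.tail hEac'
        have hanl : ¬ N.IsLeaf a := not_isLeaf_of_edge hEac'
        by_cases har : N.IsRet a
        · exact FW.ret har hEac' (ih hc'cond hroot')
        · obtain ⟨e, he, hec⟩ := exists_other_child hN hanl har hEac'
          have here : N.IsRet e := by
            by_contra hnr
            have hSae := force a hroot e (TransGen.single he) hnr a he
            have h2 : ({w | S a w} : Set V).ncard ≤ 1 := le_of_eq hdegs.1
            exact hec (ncard1_unique (Set.toFinite _) h2 hSae hS)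
          have hc'nr : ¬ N.IsRet c' := by
            intro hcr
            obtain ⟨w, hw, hwt⟩ := htc a hanl
            rcases children_cases hN hanl har hEac' he (fun hh => hec hh.symm) hw with rfl | rfl
            · rw [IsTreeNode] at hwt; rw [IsRet] at hcr; omega
            · rw [IsTreeNode] at hwt; rw [IsRet] at here; omega
          exact FW.tree har hEac' hc'nr he here (ih hc'cond hroot')
  -- extract the first steps of the two paths
  have getstep : ∀ (z : X), T.E p (T.leaf z) → ∃ a, N.E (φ p) a ∧ N.FW a z := by
    intro z hpz
    have hvx : ReflTransGen (fun u v => S u v ∧ (v = N.leaf z ∨ v ∉ Set.range φ))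
        (φ p) (N.leaf z) := by
      have h1 := hpathφ _ _ hpz
      rw [pathAvoid, hleafφ z] at h1
      exact h1
    have hvne : φ p ≠ N.leaf z := by
      intro hh
      have hp : p = T.leaf z := hinj (by rw [hleafφ z]; exact hh)
      exact isLeaf_no_edge (N := T) (hTphylo.leafIsLeaf z) (hp ▸ hpz)
    rcases hvx.cases_head with heq | ⟨a, ⟨hSa, haCond⟩, hpa⟩
    · exact absurd heq hvne
    · exact ⟨a, hSE _ _ hSa,
        main z a hpa haCond ((hrootreach p).tail (hSE _ _ hSa))⟩
  obtain ⟨a, hEa, hFWa⟩ := getstep x hpx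
  obtain ⟨b, hEb, hFWb⟩ := getstep y hpy
  have hab : a ≠ b := fun hh => hxy (FW_det hN htc hFWa _ (hh ▸ hFWb))
  exact ⟨φ p, a, b, x, y, hEa, hEb, hab, hFWa, hFWb, hxy, rfl⟩

end Net

end CherryDisp
section CherryCount

set_option linter.unusedVariables false
set_option linter.unusedSectionVars false
set_option maxHeartbeats 1000000

open Relation Finset

open scoped Classical

variable {V X : Type} [Fintype V] [Fintype X]

lemma transGen_exists_edge {α : Type} {r : α → α → Prop} {a b : α}
    (h : Relation.TransGen r a b) : ∃ c, r a c := by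
  induction h with
  | single h => exact ⟨_, h⟩
  | tail _ _ ih => exact ih

namespace Net

variable {N : Net V X}

lemma outDeg_eq_sum (N : Net V X) (v : V) :
    N.outDeg v = ∑ w : V, if N.E v w then 1 else 0 := by
  change ({w | N.E v w}).ncard = _
  rw [Set.ncard_eq_toFinset_card', Set.toFinset_setOf, Finset.card_filter]

lemma inDeg_eq_sum (N : Net V X) (v : V) :
    N.inDeg v = ∑ u : V, if N.E u v then 1 else 0 := by
  change ({u | N.E u v}).ncard = _
  rw [Set.ncard_eq_toFinset_card', Set.toFinset_setOf, Finset.card_filter]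

lemma sum_deg (N : Net V X) : ∑ v : V, N.outDeg v = ∑ v : V, N.inDeg v := by
  calc ∑ v : V, N.outDeg v = ∑ v : V, ∑ w : V, if N.E v w then 1 else 0 :=
        Finset.sum_congr rfl (fun v _ => outDeg_eq_sum N v)
    _ = ∑ w : V, ∑ v : V, if N.E v w then 1 else 0 := Finset.sum_comm
    _ = ∑ v : V, N.inDeg v := (Finset.sum_congr rfl (fun v _ => inDeg_eq_sum N v)).symm

lemma leaves_card (hN : N.IsPhylo) :
    (univ.filter (fun v => N.IsLeaf v)).card = Fintype.card X := by
  have : univ.filter (fun v => N.IsLeaf v) = univ.image N.leaf := by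
    ext v
    simp only [mem_filter, mem_univ, true_and, mem_image]
    constructor
    · intro hl
      obtain ⟨x, hx⟩ := hN.leafSurj v hl
      exact ⟨x, hx⟩
    · rintro ⟨x, rfl⟩
      exact hN.leafIsLeaf x
  rw [this, Finset.card_image_of_injective _ hN.leafInj, card_univ]

lemma nonroot_inDeg_one (hN : N.IsPhylo) {v : V} (hv : v ≠ N.root) (hr : ¬ N.IsRet v) :
    N.inDeg v = 1 := by
  obtain ⟨u, hu⟩ := nonroot_has_parent hN hv
  refine le_antisymm ?_ ?_
  · by_contra hh
    exact hr (show 2 ≤ N.inDeg v by omega)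
  · exact (Set.ncard_pos (Set.toFinite _)).2 ⟨u, hu⟩

/-- The key degree count: `2 tn + rt + 1 = n + 2 rt + tn`, i.e. `tn = n + rt - 1`. -/
lemma key_count (hN : N.IsBinaryNet) :
    2 * (univ.filter (fun v : V => ¬ N.IsLeaf v ∧ ¬ N.IsRet v)).card
        + (univ.filter (fun v : V => N.IsRet v)).card + 1
      = Fintype.card X + 2 * (univ.filter (fun v : V => N.IsRet v)).card
        + (univ.filter (fun v : V => ¬ N.IsLeaf v ∧ ¬ N.IsRet v)).card := by
  set TNs := univ.filter (fun v : V => ¬ N.IsLeaf v ∧ ¬ N.IsRet v) with hTNs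
  set RTs := univ.filter (fun v : V => N.IsRet v) with hRTs
  set LVs := univ.filter (fun v : V => N.IsLeaf v) with hLVs
  have hphylo := hN.toIsPhylo
  -- partition of the vertex set
  have hsplit : ∀ f : V → ℕ,
      ∑ v : V, f v = ∑ v ∈ LVs, f v + ∑ v ∈ RTs, f v + ∑ v ∈ TNs, f v := by
    intro f
    have h1 := Finset.sum_filter_add_sum_filter_not univ (fun v => N.IsLeaf v) f
    have h2 := Finset.sum_filter_add_sum_filter_not
      (univ.filter (fun v => ¬ N.IsLeaf v)) (fun v => N.IsRet v) f
    rw [Finset.filter_filter, Finset.filter_filter] at h2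
    have hRT : univ.filter (fun v => ¬ N.IsLeaf v ∧ N.IsRet v) = RTs := by
      rw [hRTs]
      ext v
      simp only [mem_filter, mem_univ, true_and]
      exact ⟨fun h => h.2, fun h => ⟨ret_not_leaf hphylo h, h⟩⟩
    rw [hRT] at h2
    rw [← h1, ← h2]
    ring
  -- out-degrees
  have hout : ∑ v : V, N.outDeg v = 2 * TNs.card + RTs.card := by
    rw [hsplit N.outDeg]
    have hL : ∑ v ∈ LVs, N.outDeg v = 0 := by
      refine Finset.sum_eq_zero fun v hv => ?_
      exact (mem_filter.1 hv).2
    have hR : ∑ v ∈ RTs, N.outDeg v = RTs.card := by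
      rw [Finset.sum_congr rfl fun v hv => ret_outDeg_one hN (mem_filter.1 hv).2]
      simp [hRTs]
    have hT : ∑ v ∈ TNs, N.outDeg v = 2 * TNs.card := by
      rw [Finset.sum_congr rfl fun v hv =>
        outDeg_two hN (mem_filter.1 hv).2.1 (mem_filter.1 hv).2.2]
      simp [mul_comm]
    rw [hL, hR, hT]; ring
  -- in-degrees
  have hroot : N.root ∈ TNs := by
    simp only [hTNs, mem_filter, mem_univ, true_and]
    exact ⟨root_not_leaf hphylo, root_not_ret hphylo⟩
  have hin : ∑ v : V, N.inDeg v + 1 = Fintype.card X + 2 * RTs.card + TNs.card := by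
    rw [hsplit N.inDeg]
    have hL : ∑ v ∈ LVs, N.inDeg v = Fintype.card X := by
      have h1 : ∑ v ∈ LVs, N.inDeg v = ∑ v ∈ LVs, 1 :=
        Finset.sum_congr rfl fun v hv => by
          obtain ⟨x, rfl⟩ := hphylo.leafSurj v (mem_filter.1 hv).2
          exact hphylo.leafIn x
      rw [h1, Finset.sum_const, smul_eq_mul, mul_one, hLVs, leaves_card hphylo]
    have hR : ∑ v ∈ RTs, N.inDeg v = 2 * RTs.card := by
      rw [Finset.sum_congr rfl fun v hv => ret_inDeg_two hN (mem_filter.1 hv).2]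
      simp [mul_comm, hRTs]
    have hT : ∑ v ∈ TNs, N.inDeg v + 1 = TNs.card := by
      have h0 : ∑ v ∈ TNs.erase N.root, N.inDeg v + N.inDeg N.root = ∑ v ∈ TNs, N.inDeg v :=
        Finset.sum_erase_add _ _ hroot
      have h1 : ∑ v ∈ TNs.erase N.root, N.inDeg v = ∑ v ∈ TNs.erase N.root, 1 :=
        Finset.sum_congr rfl fun v hv => nonroot_inDeg_one hphylo (Finset.mem_erase.1 hv).1
          ((mem_filter.1 (Finset.mem_erase.1 hv).2).2.2)
      rw [Finset.sum_const, smul_eq_mul, mul_one] at h1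
      have h2 : (TNs.erase N.root).card = TNs.card - 1 := Finset.card_erase_of_mem hroot
      have h3 : 0 < TNs.card := Finset.card_pos.2 ⟨_, hroot⟩
      rw [hphylo.rootIn] at h0
      omega
    omega
  have := sum_deg N
  omega

/-- Double counting reticulation in-edges: the number of vertices with a reticulate
child is `2 rt`. -/
lemma nonstuck_count (hN : N.IsBinaryNet) (htc : N.TreeChild) :
    (univ.filter (fun v : V => ∃ w, N.E v w ∧ N.IsRet w)).card
      = 2 * (univ.filter (fun v : V => N.IsRet v)).card := by
  have lhs : ∀ u : V, (univ.filter (fun b => N.E u b ∧ N.IsRet b)).card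
      = if (∃ w, N.E u w ∧ N.IsRet w) then 1 else 0 := by
    intro u
    by_cases hu : ∃ w, N.E u w ∧ N.IsRet w
    · obtain ⟨b, hb, hbr⟩ := hu
      rw [if_pos ⟨b, hb, hbr⟩]
      rw [show univ.filter (fun b' => N.E u b' ∧ N.IsRet b') = {b} from ?_]
      · exact Finset.card_singleton b
      · ext b'
        simp only [mem_filter, mem_univ, true_and, Finset.mem_singleton]
        constructor
        · rintro ⟨h1, h2⟩
          exact ret_child_unique hN htc h1 hb h2 hbr
        · rintro rfl
          exact ⟨hb, hbr⟩
    · rw [if_neg hu, Finset.card_eq_zero, Finset.filter_eq_empty_iff]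
      exact fun {b'} _ hb' => hu ⟨b', hb'⟩
  have rhs : ∀ b : V, (univ.filter (fun u => N.E u b ∧ N.IsRet b)).card
      = if N.IsRet b then N.inDeg b else 0 := by
    intro b
    by_cases hb : N.IsRet b
    · rw [if_pos hb, inDeg_eq_sum, Finset.card_filter]
      exact Finset.sum_congr rfl fun u _ => by
        by_cases h : N.E u b <;> simp [h, hb]
    · rw [if_neg hb, Finset.card_eq_zero, Finset.filter_eq_empty_iff]
      exact fun {u} _ hp => hb hp.2
  calc (univ.filter (fun v : V => ∃ w, N.E v w ∧ N.IsRet w)).card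
      = ∑ u : V, if (∃ w, N.E u w ∧ N.IsRet w) then 1 else 0 := Finset.card_filter _ _
    _ = ∑ u : V, (univ.filter (fun b => N.E u b ∧ N.IsRet b)).card :=
        (Finset.sum_congr rfl fun u _ => (lhs u).symm)
    _ = ∑ u : V, ∑ b : V, if N.E u b ∧ N.IsRet b then 1 else 0 :=
        Finset.sum_congr rfl fun u _ => Finset.card_filter _ _
    _ = ∑ b : V, ∑ u : V, if N.E u b ∧ N.IsRet b then 1 else 0 := Finset.sum_comm
    _ = ∑ b : V, (univ.filter (fun u => N.E u b ∧ N.IsRet b)).card :=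
        Finset.sum_congr rfl fun b _ => (Finset.card_filter _ _).symm
    _ = ∑ b : V, if N.IsRet b then N.inDeg b else 0 :=
        Finset.sum_congr rfl fun b _ => rhs b
    _ = ∑ b ∈ univ.filter (fun v : V => N.IsRet v), N.inDeg b :=
        (Finset.sum_filter _ _).symm
    _ = 2 * (univ.filter (fun v : V => N.IsRet v)).card := by
        rw [Finset.sum_congr rfl fun v hv => ret_inDeg_two hN (mem_filter.1 hv).2]
        simp [mul_comm]

end Net

end CherryCount
section CherryMain

set_option linter.unusedVariables false
set_option linter.unusedSectionVars false
set_option maxHeartbeats 1600000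

open Relation Finset

open scoped Classical

variable {V X : Type} [Fintype V] [Fintype X]

namespace Net

variable {N : Net V X}

/-- The main bound on the set of displayed cherries. -/
lemma cherry_set_bound (hN : N.IsBinaryNet) (htc : N.TreeChild) (hn : 2 ≤ Fintype.card X) :
    {p : Sym2 X | ∃ x y, p = s(x, y) ∧ DisplaysCherry N x y}.ncard
      ≤ 2 * Fintype.card X - 3 := by
  set TNs := univ.filter (fun v : V => ¬ N.IsLeaf v ∧ ¬ N.IsRet v) with hTNs
  set hfun : V → Option (Sym2 X) :=
    fun v => if h : ∃ p, N.CherryAt v p then some h.choose else none with hhfun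
  have hfun_eq : ∀ v p, N.CherryAt v p → hfun v = some p := by
    intro v p hp
    have hex : ∃ p, N.CherryAt v p := ⟨p, hp⟩
    rw [hhfun]
    simp only [dif_pos hex]
    exact congrArg some (CherryAt_det hN htc hex.choose_spec hp)
  set Img := TNs.image hfun with hImg
  -- the displayed cherry set injects into the image of `hfun`
  have hC : {p : Sym2 X | ∃ x y, p = s(x, y) ∧ DisplaysCherry N x y}.ncard ≤ Img.card := by
    have hsub : (Option.some '' {p : Sym2 X | ∃ x y, p = s(x, y) ∧ DisplaysCherry N x y})
        ⊆ ↑Img := by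
      rintro _ ⟨q, ⟨x, y, rfl, hdisp⟩, rfl⟩
      obtain ⟨v, hv⟩ := displayed_cherry_at hN htc hdisp
      have hvTN : v ∈ TNs := by
        rw [hTNs]
        simp only [mem_filter, mem_univ, true_and]
        exact CherryAt_treeNode hN hv
      exact Finset.mem_coe.2 (Finset.mem_image.2 ⟨v, hvTN, hfun_eq v _ hv⟩)
    calc {p : Sym2 X | ∃ x y, p = s(x, y) ∧ DisplaysCherry N x y}.ncard
        = (Option.some '' {p : Sym2 X | ∃ x y, p = s(x, y) ∧ DisplaysCherry N x y}).ncard :=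
          (Set.ncard_image_of_injective _ (Option.some_injective _)).symm
      _ ≤ (↑Img : Set (Option (Sym2 X))).ncard :=
          Set.ncard_le_ncard hsub (Finset.finite_toSet _)
      _ = Img.card := Set.ncard_coe_finset _
  have hkey := key_count (N := N) hN
  have hns2 := nonstuck_count (N := N) hN htc
  rw [← hTNs] at hkey
  have hsplitstuck : (TNs.filter (fun v => ∃ w, N.E v w ∧ N.IsRet w)).card
      + (TNs.filter (fun v => ¬ ∃ w, N.E v w ∧ N.IsRet w)).card = TNs.card :=
    Finset.card_filter_add_card_filter_not _
  have hnsTN : TNs.filter (fun v => ∃ w, N.E v w ∧ N.IsRet w)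
      = univ.filter (fun v : V => ∃ w, N.E v w ∧ N.IsRet w) := by
    rw [hTNs, Finset.filter_filter]
    ext v
    simp only [mem_filter, mem_univ, true_and]
    constructor
    · exact fun h => h.2
    · intro h
      obtain ⟨w, hw, hwr⟩ := h
      exact ⟨ret_parent hN htc hw hwr, ⟨w, hw, hwr⟩⟩
  have hnscard : (TNs.filter (fun v => ∃ w, N.E v w ∧ N.IsRet w)).card
      = 2 * (univ.filter (fun v : V => N.IsRet v)).card := by
    rw [hnsTN]; exact hns2
  by_cases hstuck : (TNs.filter (fun v => ¬ ∃ w, N.E v w ∧ N.IsRet w)).card = 0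
  · -- no stuck vertices: find a duplicate via a minimal reticulation
    have hnsall : ∀ v : V, ¬ N.IsLeaf v → ¬ N.IsRet v → ∃ w, N.E v w ∧ N.IsRet w := by
      intro v hl hr
      by_contra hh
      have hv : v ∈ TNs.filter (fun v => ¬ ∃ w, N.E v w ∧ N.IsRet w) := by
        rw [hTNs]
        simp only [mem_filter, mem_univ, true_and]
        exact ⟨⟨hl, hr⟩, hh⟩
      rw [Finset.card_eq_zero] at hstuck
      rw [hstuck] at hv
      exact absurd hv (Finset.notMem_empty v)
    -- there is at least one reticulation
    have hrt1 : 1 ≤ (univ.filter (fun v : V => N.IsRet v)).card := by omega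
    obtain ⟨b0, hb0mem⟩ := Finset.card_pos.1 (by omega :
      0 < (univ.filter (fun v : V => N.IsRet v)).card)
    have hb0 : N.IsRet b0 := (mem_filter.1 hb0mem).2
    obtain ⟨bs, hbs, hbmin⟩ := (acyclic_wf hN.acyclic).has_min {b | N.IsRet b} ⟨b0, hb0⟩
    have hSA : ∀ u, TransGen N.E u bs → ¬ N.IsRet u ∧ ¬ N.IsLeaf u := by
      intro u hu
      obtain ⟨c, hc⟩ := transGen_exists_edge hu
      exact ⟨fun hr => hbmin u hr hu, not_isLeaf_of_edge hc⟩
    -- the two parents of `bs`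
    have h2in : 1 < ({u | N.E u bs} : Set V).ncard := lt_of_lt_of_le one_lt_two hbs
    obtain ⟨p1, hp1, p2, hp2, hp12⟩ := (Set.one_lt_ncard (Set.toFinite _)).1 h2in
    -- walks from comparable ancestors of `bs` agree
    have FWeq : ∀ w, TransGen N.E w bs → ∀ u, TransGen N.E u bs → ReflTransGen N.E u w →
        ∀ x, (N.FW u x ↔ N.FW w x) := by
      intro w
      induction w using (acyclic_wf hN.acyclic).induction with
      | _ w IH =>
        intro hw u hu huw x
        rcases huw.cases_tail with heq | ⟨q, huq, hqw⟩
        · rw [heq]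
        · have hq : TransGen N.E q bs := TransGen.head hqw hw
          have hwsa := hSA w hw
          have hqsa := hSA q hq
          obtain ⟨e, he, her⟩ := hnsall q hqsa.2 hqsa.1
          have hiff := FW_tree_inv hN htc hqw hwsa.1 he her x
          exact (IH q (TransGen.single hqw) hq u hu huq x).trans hiff
    -- the two parents are comparable
    have hcomp : ReflTransGen N.E p1 p2 ∨ ReflTransGen N.E p2 p1 := by
      obtain ⟨m, ⟨hm1, hm2⟩, hmmin⟩ := (acyclic_wf_swap hN.acyclic).has_min
        {u | ReflTransGen N.E u p1 ∧ ReflTransGen N.E u p2}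
        ⟨N.root, hN.reach p1, hN.reach p2⟩
      by_cases hmp1 : m = p1
      · exact Or.inl (hmp1 ▸ hm2)
      by_cases hmp2 : m = p2
      · exact Or.inr (hmp2 ▸ hm1)
      rcases hm1.cases_head with heq | ⟨c1, hmc1, hc1p⟩
      · exact absurd heq hmp1
      rcases hm2.cases_head with heq | ⟨c2, hmc2, hc2p⟩
      · exact absurd heq hmp2
      have hc12 : c1 ≠ c2 := by
        rintro rfl
        exact hmmin c1 ⟨hc1p, hc2p⟩ (TransGen.single hmc1)
      have hc1sa : TransGen N.E c1 bs := TransGen.trans_right hc1p (TransGen.single hp1)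
      have hc2sa : TransGen N.E c2 bs := TransGen.trans_right hc2p (TransGen.single hp2)
      have hmsa : TransGen N.E m bs := TransGen.head hmc1 hc1sa
      have hmprop := hSA m hmsa
      obtain ⟨e, he, her⟩ := hnsall m hmprop.2 hmprop.1
      rcases children_cases hN hmprop.2 hmprop.1 hmc1 hmc2 hc12 he with rfl | rfl
      · exact absurd her (hSA _ hc1sa).1
      · exact absurd her (hSA _ hc2sa).1
    have hFWp : ∀ x, N.FW p1 x ↔ N.FW p2 x := by
      rcases hcomp with hcase | hcase
      · exact fun x => FWeq p2 (TransGen.single hp2) p1 (TransGen.single hp1) hcase x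
      · exact fun x => (FWeq p1 (TransGen.single hp1) p2 (TransGen.single hp2) hcase x).symm
    -- cherries transfer between the two parents
    have hbsr : N.IsRet bs := hbs
    have htrans : ∀ q1 q2 : V, N.E q1 bs → N.E q2 bs → (∀ x, N.FW q1 x ↔ N.FW q2 x) →
        ∀ p, N.CherryAt q1 p → N.CherryAt q2 p := by
      intro q1 q2 h1 h2 hFW p hp
      obtain ⟨hl1, hr1⟩ := ret_parent hN htc h1 hbsr
      obtain ⟨hl2, hr2⟩ := ret_parent hN htc h2 hbsr
      obtain ⟨a2, ha2, ha2ne⟩ := exists_other_child hN hl2 hr2 h2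
      have ha2nr : ¬ N.IsRet a2 := fun hr => ha2ne (ret_child_unique hN htc ha2 h2 hr hbsr)
      obtain ⟨a1, ha1, ha1ne⟩ := exists_other_child hN hl1 hr1 h1
      have ha1nr : ¬ N.IsRet a1 := fun hr => ha1ne (ret_child_unique hN htc ha1 h1 hr hbsr)
      obtain ⟨a, b, x, y, ha, hb, hab, hax, hby, hxy, rfl⟩ := hp
      have hchain : ∀ x, N.FW a1 x ↔ N.FW a2 x := fun x =>
        ((FW_tree_inv hN htc ha1 ha1nr h1 hbsr x).symm.trans (hFW x)).trans
          (FW_tree_inv hN htc ha2 ha2nr h2 hbsr x)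
      have hba1 : bs ≠ a1 := fun hh => ha1ne hh.symm
      rcases children_cases hN hl1 hr1 h1 ha1 hba1 ha with habs | haa1
      · rcases children_cases hN hl1 hr1 h1 ha1 hba1 hb with hbbs | hba1'
        · exact absurd (habs.trans hbbs.symm) hab
        · exact ⟨bs, a2, x, y, h2, ha2, (fun hh => ha2ne hh.symm), habs ▸ hax,
            (hchain y).1 (hba1' ▸ hby), hxy, rfl⟩
      · rcases children_cases hN hl1 hr1 h1 ha1 hba1 hb with hbbs | hba1'
        · exact ⟨a2, bs, x, y, ha2, h2, ha2ne, (hchain x).1 (haa1 ▸ hax),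
            hbbs ▸ hby, hxy, rfl⟩
        · exact absurd (haa1.trans hba1'.symm) hab
    have hfun12 : hfun p1 = hfun p2 := by
      by_cases hex : ∃ p, N.CherryAt p1 p
      · obtain ⟨p, hp⟩ := hex
        rw [hfun_eq p1 p hp, hfun_eq p2 p (htrans _ _ hp1 hp2 hFWp p hp)]
      · have hex2 : ¬ ∃ p, N.CherryAt p2 p := by
          rintro ⟨p, hp⟩
          exact hex ⟨p, htrans _ _ hp2 hp1 (fun x => (hFWp x).symm) p hp⟩
        rw [hhfun]
        simp only [dif_neg hex, dif_neg hex2]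
    have hp1prop := ret_parent hN htc hp1 hbsr
    have hp2prop := ret_parent hN htc hp2 hbsr
    have hp1TN : p1 ∈ TNs := by
      rw [hTNs]; simp only [mem_filter, mem_univ, true_and]; exact hp1prop
    have hp2TN : p2 ∈ TNs := by
      rw [hTNs]; simp only [mem_filter, mem_univ, true_and]; exact hp2prop
    have hsubI : Img ⊆ (TNs.erase p1).image hfun := by
      intro q hq
      obtain ⟨v, hv, rfl⟩ := Finset.mem_image.1 hq
      by_cases hvp : v = p1
      · subst hvp
        rw [hfun12]
        exact Finset.mem_image_of_mem _ (Finset.mem_erase.2 ⟨fun hh => hp12 hh.symm, hp2TN⟩)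
      · exact Finset.mem_image_of_mem _ (Finset.mem_erase.2 ⟨hvp, hv⟩)
    have hImgle : Img.card ≤ TNs.card - 1 := by
      calc Img.card ≤ ((TNs.erase p1).image hfun).card := Finset.card_le_card hsubI
        _ ≤ (TNs.erase p1).card := Finset.card_image_le
        _ = TNs.card - 1 := Finset.card_erase_of_mem hp1TN
    have htnpos : 0 < TNs.card := Finset.card_pos.2 ⟨p1, hp1TN⟩
    omega
  · -- there is a stuck vertex
    have hImgle : Img.card ≤ TNs.card := Finset.card_image_le
    omega

end Net

end CherryMain

/-- A binary tree-child network on `n` taxa displays at most `2n - 3` distinct cherries;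
consequently, any set of binary trees co-displayed in it has at most `2n - 3` distinct
cherries. -/
theorem stmt_10 {V X : Type} [Fintype V] [Fintype X] (N : Net V X)
    (hN : N.IsBinaryNet) (htc : N.TreeChild) (hn : 2 ≤ Fintype.card X) :
    {p : Sym2 X | ∃ x y, p = s(x, y) ∧ DisplaysCherry N x y}.ncard
      ≤ 2 * Fintype.card X - 3 ∧
    ∀ (ι : Type) (VT : ι → Type) (Ts : ∀ i, Net (VT i) X),
      (∀ i, Finite (VT i)) → (∀ i, (Ts i).IsBinaryTree) → (∀ i, Display (Ts i) N) →
      {p : Sym2 X | ∃ i, p ∈ Net.cherries (Ts i)}.ncard ≤ 2 * Fintype.card X - 3 := by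
  constructor
  · exact Net.cherry_set_bound hN htc hn
  · intro ι VT Ts hfin hbt hdisp
    have hsub : {p : Sym2 X | ∃ i, p ∈ Net.cherries (Ts i)}
        ⊆ {p : Sym2 X | ∃ x y, p = s(x, y) ∧ DisplaysCherry N x y} := by
      rintro p ⟨i, x, y, rfl, hch⟩
      exact ⟨x, y, rfl, ⟨VT i, Ts i, hfin i, hbt i, hdisp i, hch⟩⟩
    exact le_trans (Set.ncard_le_ncard hsub (Set.toFinite _))
      (Net.cherry_set_bound hN htc hn)
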